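/- With notation as above (T ⊆ [0,1), μ Borel probability measure, A^(k)_i, I(k), L = 2^(1/2)·5/4 < 2), assume that S := Σ_{k=1}^∞ 2^(-k) Σ_{i=0}^{4^k-1} (μ(A^(k)_i))^(1/2)·1[i ∈ I(k)] < ∞. Then Σ_{k=1}^∞ 2^(-k) Σ_{i=0}^{4^k-1} (μ(A^(k)_i))^(1/2) ≤ (1/(1-L/2))·(L + S), and consequently ∫_T ∫₀¹ (μ(B(t,r²)))^(-1/2) dr dμ(t) ≤ (1/(1-L/2))·(L + S). -/

import Mathlib

open MeasureTheory ENNReal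

/-- The level-`k` cell `A^{(k)}_i = [i·4^{-k}, (i+1)·4^{-k}) ∩ T`. -/
def Acell (T : Set ℝ) (k i : ℕ) : Set ℝ :=
  Set.Ico ((i : ℝ) * ((4:ℝ) ^ k)⁻¹) (((i : ℝ) + 1) * ((4:ℝ) ^ k)⁻¹) ∩ T

/-- `n = 4i+j ∈ I(k)`: the measure of `A^{(k-1)}_i` is well distributed among the children. -/
def goodIdx (T : Set ℝ) (μ : Measure ℝ) (k n : ℕ) : Prop :=
  if n % 4 = 0 ∨ n % 4 = 2 then
    (1/32) * μ (Acell T (k-1) (n / 4)) ≤ μ (Acell T k n) ∧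
      μ (Acell T k n) ≤ (1/2) * μ (Acell T k (4 * (n / 4)) ∪ Acell T k (4 * (n / 4) + 2))
  else
    (1/32) * μ (Acell T (k-1) (n / 4)) ≤ μ (Acell T k n) ∧
      μ (Acell T k n) ≤ (1/2) * μ (Acell T k (4 * (n / 4) + 1) ∪ Acell T k (4 * (n / 4) + 3))

set_option linter.unusedVariables false
set_option linter.unusedSectionVars false
set_option linter.unnecessarySeqFocus false
set_option linter.unusedTactic false
set_option linter.unreachableTactic false
set_option maxHeartbeats 1000000

def cellIco (k n : ℕ) : Set ℝ :=
  Set.Ico ((n : ℝ) * ((4:ℝ) ^ k)⁻¹) (((n : ℝ) + 1) * ((4:ℝ) ^ k)⁻¹)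

lemma Acell_eq (T : Set ℝ) (k n : ℕ) : Acell T k n = cellIco k n ∩ T := rfl

lemma fourpow_pos (k : ℕ) : (0:ℝ) < (4:ℝ)^k := by positivity

lemma cellIco_subset_unit {k n : ℕ} (h : n < 4 ^ k) : cellIco k n ⊆ Set.Ico 0 1 := by
  have hp := fourpow_pos k
  have hn : (n:ℝ) + 1 ≤ (4:ℝ)^k := by
    have : ((n:ℕ):ℝ) + 1 ≤ ((4^k : ℕ) : ℝ) := by exact_mod_cast Nat.succ_le_of_lt h
    simpa [Nat.cast_pow] using this
  intro x hx
  obtain ⟨h1, h2⟩ := hx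
  constructor
  · have : (0:ℝ) ≤ (n:ℝ) * ((4:ℝ)^k)⁻¹ := by positivity
    linarith
  · calc x < ((n:ℝ)+1) * ((4:ℝ)^k)⁻¹ := h2
      _ ≤ (4:ℝ)^k * ((4:ℝ)^k)⁻¹ := by
          apply mul_le_mul_of_nonneg_right hn (by positivity)
      _ = 1 := by field_simp

lemma cellIco_child_subset {k i j : ℕ} (hj : j < 4) : cellIco (k+1) (4*i+j) ⊆ cellIco k i := by
  have hp := fourpow_pos (k+1)
  have h4 : ((4:ℝ)^(k+1))⁻¹ = ((4:ℝ)^k)⁻¹ / 4 := by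
    rw [pow_succ]; field_simp
  intro x hx
  obtain ⟨h1, h2⟩ := hx
  have hc : ((4*i+j : ℕ) : ℝ) = 4*(i:ℝ) + (j:ℝ) := by push_cast; ring
  constructor
  · calc (i:ℝ) * ((4:ℝ)^k)⁻¹ = (4*(i:ℝ)) * (((4:ℝ)^k)⁻¹/4) := by ring
      _ ≤ (4*(i:ℝ)+(j:ℝ)) * (((4:ℝ)^k)⁻¹/4) := by
          apply mul_le_mul_of_nonneg_right _ (by positivity)
          have : (0:ℝ) ≤ (j:ℝ) := Nat.cast_nonneg j
          linarith
      _ = ((4*i+j : ℕ) : ℝ) * ((4:ℝ)^(k+1))⁻¹ := by rw [hc, h4]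
      _ ≤ x := h1
  · have hj' : (j:ℝ) + 1 ≤ 4 := by exact_mod_cast Nat.succ_le_of_lt hj
    calc x < (((4*i+j : ℕ):ℝ) + 1) * ((4:ℝ)^(k+1))⁻¹ := h2
      _ = (4*(i:ℝ) + ((j:ℝ)+1)) * (((4:ℝ)^k)⁻¹/4) := by rw [hc, h4]; ring
      _ ≤ (4*(i:ℝ) + 4) * (((4:ℝ)^k)⁻¹/4) := by
          apply mul_le_mul_of_nonneg_right _ (by positivity); linarith
      _ = ((i:ℝ)+1) * ((4:ℝ)^k)⁻¹ := by ring

lemma cellIco_disjoint {k m n : ℕ} (h : m ≠ n) : Disjoint (cellIco k m) (cellIco k n) := by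
  have hp := fourpow_pos k
  have key : ∀ a b : ℕ, a < b → Disjoint (cellIco k a) (cellIco k b) := by
    intro a b hab
    apply Set.disjoint_left.2
    rintro x ⟨_, h2⟩ ⟨h3, _⟩
    have hab' : (a:ℝ) + 1 ≤ (b:ℝ) := by exact_mod_cast Nat.succ_le_of_lt hab
    have : ((a:ℝ)+1) * ((4:ℝ)^k)⁻¹ ≤ (b:ℝ) * ((4:ℝ)^k)⁻¹ :=
      mul_le_mul_of_nonneg_right hab' (by positivity)
    linarith
  rcases Nat.lt_or_ge m n with h1 | h1
  · exact key m n h1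
  · exact (key n m (lt_of_le_of_ne h1 (Ne.symm h))).symm

lemma mem_cellIco_iff {k n : ℕ} {t : ℝ} :
    t ∈ cellIco k n ↔ (n:ℝ) ≤ t * 4^k ∧ t * 4^k < (n:ℝ) + 1 := by
  have hp := fourpow_pos k
  have hinv : ((4:ℝ)^k)⁻¹ * (4:ℝ)^k = 1 := by field_simp
  constructor
  · rintro ⟨h1, h2⟩
    constructor <;> nlinarith
  · rintro ⟨h1, h2⟩
    constructor <;> [nlinarith; nlinarith]

lemma mem_cellIco_floor {k : ℕ} {t : ℝ} (h : t ∈ Set.Ico (0:ℝ) 1) :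
    t ∈ cellIco k ⌊t * 4^k⌋₊ ∧ ⌊t * 4^k⌋₊ < 4^k := by
  have hp := fourpow_pos k
  have ht0 : 0 ≤ t * 4^k := mul_nonneg h.1 (le_of_lt hp)
  have h1 : (⌊t * 4^k⌋₊ : ℝ) ≤ t * 4^k := Nat.floor_le ht0
  have h2 : t * 4^k < (⌊t * 4^k⌋₊ : ℝ) + 1 := Nat.lt_floor_add_one _
  refine ⟨mem_cellIco_iff.2 ⟨h1, h2⟩, ?_⟩
  have : t * 4^k < (4:ℝ)^k := by nlinarith [h.2]
  have := Nat.floor_lt ht0 |>.2 (by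
    calc t * 4^k < (4:ℝ)^k := this
      _ = ((4^k : ℕ) : ℝ) := by push_cast; ring)
  exact this

lemma cellIco_width {k : ℕ} {n : ℕ} {s t : ℝ} (hs : s ∈ cellIco k n) (ht : t ∈ cellIco k n) :
    |s - t| < ((4:ℝ)^k)⁻¹ := by
  obtain ⟨hs1, hs2⟩ := hs
  obtain ⟨ht1, ht2⟩ := ht
  rw [abs_sub_lt_iff]
  constructor <;> nlinarith [fourpow_pos k]


lemma sqrt_add_le_sqrt2 {x y : ℝ} (hx : 0 ≤ x) (hy : 0 ≤ y) :
    Real.sqrt x + Real.sqrt y ≤ Real.sqrt 2 * Real.sqrt (x + y) := by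
  have ha := Real.sqrt_nonneg x
  have hb := Real.sqrt_nonneg y
  have hc := Real.sqrt_nonneg (x+y)
  have h2 := Real.sqrt_nonneg 2
  have ha2 : Real.sqrt x ^ 2 = x := Real.sq_sqrt hx
  have hb2 : Real.sqrt y ^ 2 = y := Real.sq_sqrt hy
  have hc2 : Real.sqrt (x+y) ^ 2 = x + y := Real.sq_sqrt (by linarith)
  have h22 : Real.sqrt 2 ^ 2 = 2 := Real.sq_sqrt (by norm_num)
  nlinarith [sq_nonneg (Real.sqrt x - Real.sqrt y),
    sq_nonneg (Real.sqrt x + Real.sqrt y - Real.sqrt 2 * Real.sqrt (x+y)),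
    mul_nonneg h2 hc]

lemma sqrt_m32 {m : ℝ} (hm : 0 ≤ m) : Real.sqrt (m/32) = Real.sqrt 2 / 8 * Real.sqrt m := by
  have : m / 32 = (Real.sqrt 2 / 8)^2 * m := by
    rw [div_pow, Real.sq_sqrt (by norm_num : (0:ℝ) ≤ 2)]; ring
  rw [this, Real.sqrt_mul (by positivity), Real.sqrt_sq (by positivity)]

lemma pair_bound {m x y cx cy : ℝ} (hx : 0 ≤ x) (hy : 0 ≤ y)
    (hcx : cx = 0 ∨ (cx = Real.sqrt x ∧ (x < m/32 ∨ 2*x > x + y)))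
    (hcy : cy = 0 ∨ (cy = Real.sqrt y ∧ (y < m/32 ∨ 2*y > x + y))) :
    cx + cy ≤ max (Real.sqrt (x+y)) (Real.sqrt (m/32)) + Real.sqrt (m/32) := by
  have hxs : Real.sqrt x ≤ Real.sqrt (x+y) := Real.sqrt_le_sqrt (by linarith)
  have hys : Real.sqrt y ≤ Real.sqrt (x+y) := Real.sqrt_le_sqrt (by linarith)
  have h32 := Real.sqrt_nonneg (m/32)
  have hmax1 : Real.sqrt (x+y) ≤ max (Real.sqrt (x+y)) (Real.sqrt (m/32)) := le_max_left _ _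
  have hmax2 : Real.sqrt (m/32) ≤ max (Real.sqrt (x+y)) (Real.sqrt (m/32)) := le_max_right _ _
  rcases hcx with h0 | ⟨hex, hbx⟩
  · rcases hcy with h0' | ⟨hey, hby⟩
    · simp [h0, h0']; positivity
    · subst h0 hey
      rcases hby with h | h
      · have : Real.sqrt y ≤ Real.sqrt (m/32) := Real.sqrt_le_sqrt (by linarith)
        linarith
      · linarith
  · rcases hcy with h0' | ⟨hey, hby⟩
    · subst h0' hex
      rcases hbx with h | h
      · have : Real.sqrt x ≤ Real.sqrt (m/32) := Real.sqrt_le_sqrt (by linarith)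
        linarith
      · linarith
    · subst hex hey
      rcases hbx with h | h
      · have h1 : Real.sqrt x ≤ Real.sqrt (m/32) := Real.sqrt_le_sqrt (by linarith)
        rcases hby with h' | h'
        · have : Real.sqrt y ≤ Real.sqrt (m/32) := Real.sqrt_le_sqrt (by linarith)
          linarith
        · linarith
      · rcases hby with h' | h'
        · have : Real.sqrt y ≤ Real.sqrt (m/32) := Real.sqrt_le_sqrt (by linarith)
          linarith
        · linarith

lemma quad_bound {m x0 x1 x2 x3 c0 c1 c2 c3 : ℝ}
    (hx0 : 0 ≤ x0) (hx1 : 0 ≤ x1) (hx2 : 0 ≤ x2) (hx3 : 0 ≤ x3)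
    (hm : x0 + x1 + x2 + x3 ≤ m)
    (hc0 : c0 = 0 ∨ (c0 = Real.sqrt x0 ∧ (x0 < m/32 ∨ 2*x0 > x0 + x2)))
    (hc2 : c2 = 0 ∨ (c2 = Real.sqrt x2 ∧ (x2 < m/32 ∨ 2*x2 > x0 + x2)))
    (hc1 : c1 = 0 ∨ (c1 = Real.sqrt x1 ∧ (x1 < m/32 ∨ 2*x1 > x1 + x3)))
    (hc3 : c3 = 0 ∨ (c3 = Real.sqrt x3 ∧ (x3 < m/32 ∨ 2*x3 > x1 + x3))) :
    c0 + c1 + c2 + c3 ≤ Real.sqrt 2 * (5/4) * Real.sqrt m := by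
  have hm0 : 0 ≤ m := by linarith
  have hP1 := pair_bound hx0 hx2 hc0 hc2
  have hP2 := pair_bound hx1 hx3 hc1 hc3
  have hA : max (Real.sqrt (x0+x2)) (Real.sqrt (m/32)) +
      max (Real.sqrt (x1+x3)) (Real.sqrt (m/32)) ≤ Real.sqrt 2 * Real.sqrt m := by
    have h2 := Real.sqrt_nonneg 2
    have h22 : Real.sqrt 2 ^ 2 = 2 := Real.sq_sqrt (by norm_num)
    have hge1 : (1:ℝ) ≤ Real.sqrt 2 := by nlinarith
    have hmn := Real.sqrt_nonneg m
    have h32 := sqrt_m32 hm0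
    have hse : Real.sqrt (x0+x2) ≤ Real.sqrt m := Real.sqrt_le_sqrt (by linarith)
    have hso : Real.sqrt (x1+x3) ≤ Real.sqrt m := Real.sqrt_le_sqrt (by linarith)
    have hkey : Real.sqrt (x0+x2) + Real.sqrt (x1+x3) ≤ Real.sqrt 2 * Real.sqrt m := by
      calc Real.sqrt (x0+x2) + Real.sqrt (x1+x3)
          ≤ Real.sqrt 2 * Real.sqrt ((x0+x2) + (x1+x3)) :=
            sqrt_add_le_sqrt2 (by linarith) (by linarith)
        _ ≤ Real.sqrt 2 * Real.sqrt m := by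
            apply mul_le_mul_of_nonneg_left (Real.sqrt_le_sqrt (by linarith)) h2
    have h8 : (8:ℝ) ≤ 7 * Real.sqrt 2 := by nlinarith
    rcases max_cases (Real.sqrt (x0+x2)) (Real.sqrt (m/32)) with ⟨he, _⟩ | ⟨he, _⟩ <;>
      rcases max_cases (Real.sqrt (x1+x3)) (Real.sqrt (m/32)) with ⟨ho, _⟩ | ⟨ho, _⟩ <;>
      rw [he, ho] <;> nlinarith
  have h32 := sqrt_m32 hm0
  have h2 := Real.sqrt_nonneg 2
  have hmn := Real.sqrt_nonneg m
  have hfin : Real.sqrt 2 * Real.sqrt m + 2 * Real.sqrt (m/32) =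
      Real.sqrt 2 * (5/4) * Real.sqrt m := by rw [h32]; ring
  linarith



section
variable {μ : Measure ℝ} [IsProbabilityMeasure μ] {T : Set ℝ} (hμT : μ T = 1)

include hμT in
lemma thick {s : Set ℝ} (hs : MeasurableSet s) : μ (s ∩ T) = μ s := by
  set U := toMeasurable μ T with hU
  have hUm : MeasurableSet U := measurableSet_toMeasurable μ T
  have hUμ : μ U = 1 := by rw [hU, measure_toMeasurable, hμT]
  have hUc : μ Uᶜ = 0 := by
    rw [measure_compl hUm (measure_ne_top μ U), hUμ, measure_univ]; simp
  have h1 : μ (s ∩ T) = μ (s ∩ U) := by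
    rw [Set.inter_comm s T, Set.inter_comm s U]
    exact (Measure.measure_toMeasurable_inter hs (by rw [hμT]; exact one_ne_top)).symm
  have h2 : μ (s ∩ U) = μ s := by
    have hdiff : μ (s \ U) = 0 := measure_mono_null (Set.diff_subset_compl s U) hUc
    have h3 := measure_inter_add_diff (μ := μ) s hUm
    rw [hdiff, add_zero] at h3
    exact h3
  rw [h1, h2]

include hμT in
lemma μAcell (k n : ℕ) : μ (Acell T k n) = μ (cellIco k n) := by
  rw [Acell_eq]; exact thick hμT measurableSet_Ico
end

lemma measure_Ico_split (μ : Measure ℝ) {a b c : ℝ} (h1 : a ≤ b) (h2 : b ≤ c) :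
    μ (Set.Ico a c) = μ (Set.Ico a b) + μ (Set.Ico b c) := by
  rw [← Set.Ico_union_Ico_eq_Ico h1 h2]
  apply measure_union _ measurableSet_Ico
  apply Set.disjoint_left.2
  rintro x ⟨_, hx2⟩ ⟨hx3, _⟩
  exact absurd (lt_of_lt_of_le hx2 hx3) (lt_irrefl x)

lemma cellIco_child_eq (k i j : ℕ) :
    cellIco (k+1) (4*i+j) =
      Set.Ico ((4*(i:ℝ)+j) * ((4:ℝ)^(k+1))⁻¹) ((4*(i:ℝ)+(j+1)) * ((4:ℝ)^(k+1))⁻¹) := by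
  unfold cellIco
  congr 1 <;> push_cast <;> ring

lemma cellIco_parent_eq (k i : ℕ) :
    cellIco k i = Set.Ico ((4*(i:ℝ)+0) * ((4:ℝ)^(k+1))⁻¹) ((4*(i:ℝ)+4) * ((4:ℝ)^(k+1))⁻¹) := by
  unfold cellIco
  have h4 : (4:ℝ)^(k+1) = 4 * (4:ℝ)^k := by rw [pow_succ]; ring
  have hp : (0:ℝ) < (4:ℝ)^k := by positivity
  congr 1 <;> rw [h4] <;> field_simp <;> ring

lemma children_measure_sum (μ : Measure ℝ) (k i : ℕ) :
    μ (cellIco k i) = μ (cellIco (k+1) (4*i)) + μ (cellIco (k+1) (4*i+1)) +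
      μ (cellIco (k+1) (4*i+2)) + μ (cellIco (k+1) (4*i+3)) := by
  have hp : (0:ℝ) < ((4:ℝ)^(k+1))⁻¹ := by positivity
  set q := ((4:ℝ)^(k+1))⁻¹
  have e : ∀ j : ℝ, j ≤ j + 1 → True := fun _ _ => trivial
  have mono : ∀ a b : ℝ, a ≤ b → a * q ≤ b * q := fun a b h =>
    mul_le_mul_of_nonneg_right h (le_of_lt hp)
  have h0 : μ (Set.Ico ((4*(i:ℝ)+0)*q) ((4*(i:ℝ)+4)*q)) =
      μ (Set.Ico ((4*(i:ℝ)+0)*q) ((4*(i:ℝ)+1)*q)) + μ (Set.Ico ((4*(i:ℝ)+1)*q) ((4*(i:ℝ)+2)*q)) +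
      μ (Set.Ico ((4*(i:ℝ)+2)*q) ((4*(i:ℝ)+3)*q)) + μ (Set.Ico ((4*(i:ℝ)+3)*q) ((4*(i:ℝ)+4)*q)) := by
    rw [measure_Ico_split μ (mono _ _ (by linarith)) (mono _ _ (by linarith) :
          (4*(i:ℝ)+1)*q ≤ (4*(i:ℝ)+4)*q),
        measure_Ico_split μ (mono _ _ (by linarith)) (mono _ _ (by linarith) :
          (4*(i:ℝ)+2)*q ≤ (4*(i:ℝ)+4)*q),
        measure_Ico_split μ (mono _ _ (by linarith)) (mono _ _ (by linarith) :
          (4*(i:ℝ)+3)*q ≤ (4*(i:ℝ)+4)*q)]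
    ring
  have e0 := cellIco_child_eq k i 0
  have e1 := cellIco_child_eq k i 1
  have e2 := cellIco_child_eq k i 2
  have e3 := cellIco_child_eq k i 3
  norm_num at e0 e1 e2 e3
  rw [cellIco_parent_eq, e0, e1, e2, e3]
  norm_num at h0 ⊢
  convert h0 using 3 <;> norm_num



section
variable {μ : Measure ℝ} [IsProbabilityMeasure μ] {T : Set ℝ} (hμT : μ T = 1)

include hμT in
lemma union_pair {k m n : ℕ} (hmn : m ≠ n) :
    μ (Acell T k m ∪ Acell T k n) = μ (Acell T k m) + μ (Acell T k n) := by
  have hc : ∀ j : ℕ, MeasurableSet (cellIco k j) := fun j => measurableSet_Ico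
  rw [Acell_eq, Acell_eq, ← Set.union_inter_distrib_right,
    thick hμT ((hc m).union (hc n)),
    measure_union (cellIco_disjoint hmn) (hc n),
    ← thick hμT (hc m), ← thick hμT (hc n)]
end

lemma rpow_half_eq {a : ℝ≥0∞} (ha : a ≠ ⊤) :
    a ^ ((1:ℝ)/2) = ENNReal.ofReal (Real.sqrt a.toReal) := by
  conv_lhs => rw [← ENNReal.ofReal_toReal ha]
  rw [ENNReal.ofReal_rpow_of_nonneg ENNReal.toReal_nonneg (by norm_num : (0:ℝ) ≤ 1/2),
    Real.sqrt_eq_rpow]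




open Classical in
lemma parent_bound {μ : Measure ℝ} [IsProbabilityMeasure μ] {T : Set ℝ} (hμT : μ T = 1)
    (k i : ℕ) :
    (if goodIdx T μ (k+1) (4*i) then 0 else μ (Acell T (k+1) (4*i)) ^ ((1:ℝ)/2)) +
    (if goodIdx T μ (k+1) (4*i+1) then 0 else μ (Acell T (k+1) (4*i+1)) ^ ((1:ℝ)/2)) +
    (if goodIdx T μ (k+1) (4*i+2) then 0 else μ (Acell T (k+1) (4*i+2)) ^ ((1:ℝ)/2)) +
    (if goodIdx T μ (k+1) (4*i+3) then 0 else μ (Acell T (k+1) (4*i+3)) ^ ((1:ℝ)/2)) ≤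
    ENNReal.ofReal (Real.sqrt 2 * (5/4)) * μ (Acell T k i) ^ ((1:ℝ)/2) := by
  have f0 : μ (Acell T (k+1) (4*i)) ≠ ⊤ := measure_ne_top μ _
  have f1 : μ (Acell T (k+1) (4*i+1)) ≠ ⊤ := measure_ne_top μ _
  have f2 : μ (Acell T (k+1) (4*i+2)) ≠ ⊤ := measure_ne_top μ _
  have f3 : μ (Acell T (k+1) (4*i+3)) ≠ ⊤ := measure_ne_top μ _
  have fm : μ (Acell T k i) ≠ ⊤ := measure_ne_top μ _
  set x0 := (μ (Acell T (k+1) (4*i))).toReal with hx0d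
  set x1 := (μ (Acell T (k+1) (4*i+1))).toReal with hx1d
  set x2 := (μ (Acell T (k+1) (4*i+2))).toReal with hx2d
  set x3 := (μ (Acell T (k+1) (4*i+3))).toReal with hx3d
  set m := (μ (Acell T k i)).toReal with hmd
  have hsum : μ (Acell T k i) = μ (Acell T (k+1) (4*i)) + μ (Acell T (k+1) (4*i+1)) +
      μ (Acell T (k+1) (4*i+2)) + μ (Acell T (k+1) (4*i+3)) := by
    simp only [μAcell hμT]
    exact children_measure_sum μ k i
  have hmr : m = x0 + x1 + x2 + x3 := by
    rw [hmd, hsum, ENNReal.toReal_add (ENNReal.add_ne_top.2 ⟨ENNReal.add_ne_top.2 ⟨f0, f1⟩, f2⟩) f3,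
      ENNReal.toReal_add (ENNReal.add_ne_top.2 ⟨f0, f1⟩) f2, ENNReal.toReal_add f0 f1]
  -- unfold goodIdx at the four children
  have h132 : ((1/32 : ℝ≥0∞)).toReal = 1/32 := by
    rw [ENNReal.toReal_div]; norm_num
  have h12t : ((1/2 : ℝ≥0∞)).toReal = 1/2 := by
    rw [ENNReal.toReal_div]; norm_num
  have h132f : (1/32 : ℝ≥0∞) ≠ ⊤ := by
    rw [one_div]; exact ENNReal.inv_ne_top.2 (by norm_num)
  have h12f : (1/2 : ℝ≥0∞) ≠ ⊤ := by
    rw [one_div]; exact ENNReal.inv_ne_top.2 (by norm_num)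
  have hg0 : goodIdx T μ (k+1) (4*i) =
      ((1/32) * μ (Acell T k i) ≤ μ (Acell T (k+1) (4*i)) ∧
        μ (Acell T (k+1) (4*i)) ≤
          (1/2) * (μ (Acell T (k+1) (4*i)) + μ (Acell T (k+1) (4*i+2)))) := by
    have h2 : (4*i) / 4 = i := by omega
    unfold goodIdx
    rw [if_pos (Or.inl (by omega : (4*i) % 4 = 0)), h2, Nat.add_sub_cancel,
      union_pair hμT (show 4*i ≠ 4*i+2 by omega)]
  have hg1 : goodIdx T μ (k+1) (4*i+1) =
      ((1/32) * μ (Acell T k i) ≤ μ (Acell T (k+1) (4*i+1)) ∧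
        μ (Acell T (k+1) (4*i+1)) ≤
          (1/2) * (μ (Acell T (k+1) (4*i+1)) + μ (Acell T (k+1) (4*i+3)))) := by
    have h2 : (4*i+1) / 4 = i := by omega
    unfold goodIdx
    rw [if_neg (by omega), h2, Nat.add_sub_cancel,
      union_pair hμT (show 4*i+1 ≠ 4*i+3 by omega)]
  have hg2 : goodIdx T μ (k+1) (4*i+2) =
      ((1/32) * μ (Acell T k i) ≤ μ (Acell T (k+1) (4*i+2)) ∧
        μ (Acell T (k+1) (4*i+2)) ≤
          (1/2) * (μ (Acell T (k+1) (4*i)) + μ (Acell T (k+1) (4*i+2)))) := by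
    have h2 : (4*i+2) / 4 = i := by omega
    unfold goodIdx
    rw [if_pos (Or.inr (by omega : (4*i+2) % 4 = 2)), h2, Nat.add_sub_cancel,
      union_pair hμT (show 4*i ≠ 4*i+2 by omega)]
  have hg3 : goodIdx T μ (k+1) (4*i+3) =
      ((1/32) * μ (Acell T k i) ≤ μ (Acell T (k+1) (4*i+3)) ∧
        μ (Acell T (k+1) (4*i+3)) ≤
          (1/2) * (μ (Acell T (k+1) (4*i+1)) + μ (Acell T (k+1) (4*i+3)))) := by
    have h2 : (4*i+3) / 4 = i := by omega
    unfold goodIdx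
    rw [if_neg (by omega), h2, Nat.add_sub_cancel,
      union_pair hμT (show 4*i+1 ≠ 4*i+3 by omega)]
  -- finiteness of the if-terms
  have hfin : ∀ (P : Prop) (a : ℝ≥0∞), a ≠ ⊤ →
      (if P then 0 else a ^ ((1:ℝ)/2)) ≠ ⊤ := by
    intro P a ha
    split
    · exact ENNReal.zero_ne_top
    · exact ENNReal.rpow_ne_top_of_nonneg (by norm_num) ha
  have hL0 := hfin (goodIdx T μ (k+1) (4*i)) _ f0
  have hL1 := hfin (goodIdx T μ (k+1) (4*i+1)) _ f1
  have hL2 := hfin (goodIdx T μ (k+1) (4*i+2)) _ f2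
  have hL3 := hfin (goodIdx T μ (k+1) (4*i+3)) _ f3
  have hRfin : ENNReal.ofReal (Real.sqrt 2 * (5/4)) * μ (Acell T k i) ^ ((1:ℝ)/2) ≠ ⊤ :=
    ENNReal.mul_ne_top ENNReal.ofReal_ne_top (ENNReal.rpow_ne_top_of_nonneg (by norm_num) fm)
  apply (ENNReal.toReal_le_toReal
    (ENNReal.add_ne_top.2 ⟨ENNReal.add_ne_top.2 ⟨ENNReal.add_ne_top.2 ⟨hL0, hL1⟩, hL2⟩, hL3⟩)
    hRfin).mp
  rw [ENNReal.toReal_add (ENNReal.add_ne_top.2 ⟨ENNReal.add_ne_top.2 ⟨hL0, hL1⟩, hL2⟩) hL3,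
    ENNReal.toReal_add (ENNReal.add_ne_top.2 ⟨hL0, hL1⟩) hL2, ENNReal.toReal_add hL0 hL1,
    ENNReal.toReal_mul, ENNReal.toReal_ofReal (by positivity), rpow_half_eq fm,
    ENNReal.toReal_ofReal (Real.sqrt_nonneg _)]
  -- convert each ite to real
  have htc : ∀ (P : Prop) (a : ℝ≥0∞), a ≠ ⊤ →
      ((if P then 0 else a ^ ((1:ℝ)/2)) : ℝ≥0∞).toReal
        = if P then 0 else Real.sqrt a.toReal := by
    intro P a ha
    split
    · simp
    · rw [rpow_half_eq ha, ENNReal.toReal_ofReal (Real.sqrt_nonneg _)]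
  rw [htc _ _ f0, htc _ _ f1, htc _ _ f2, htc _ _ f3]
  -- derive the disjunction hypotheses and apply quad_bound
  have mk : ∀ (P : Prop) (a c : ℝ≥0∞) (pair : ℝ≥0∞), a ≠ ⊤ → c = 1/32 * μ (Acell T k i) →
      True → True := fun _ _ _ _ _ _ _ => trivial
  have conv_bad : ∀ (a b : ℝ≥0∞), a ≠ ⊤ → b ≠ ⊤ →
      ¬((1/32) * μ (Acell T k i) ≤ a ∧ a ≤ (1/2) * (a + b)) →
      (a.toReal < m/32 ∨ 2 * a.toReal > a.toReal + b.toReal) := by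
    intro a b ha hb hnot
    rcases not_and_or.1 hnot with h | h
    · left
      have hlt : a < (1/32) * μ (Acell T k i) := lt_of_not_ge h
      have := (ENNReal.toReal_lt_toReal ha (ENNReal.mul_ne_top h132f fm)).2 hlt
      rw [ENNReal.toReal_mul, h132, hmd.symm] at this
      linarith
    · right
      have hlt : (1/2) * (a + b) < a := lt_of_not_ge h
      have := (ENNReal.toReal_lt_toReal
        (ENNReal.mul_ne_top h12f (ENNReal.add_ne_top.2 ⟨ha, hb⟩)) ha).2 hlt
      rw [ENNReal.toReal_mul, h12t, ENNReal.toReal_add ha hb] at this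
      linarith
  refine quad_bound ENNReal.toReal_nonneg ENNReal.toReal_nonneg ENNReal.toReal_nonneg
    ENNReal.toReal_nonneg (le_of_eq hmr.symm) ?_ ?_ ?_ ?_
  · by_cases hP : goodIdx T μ (k+1) (4*i)
    · left; simp [hP]
    · right
      refine ⟨by simp [hP], ?_⟩
      rw [hg0] at hP
      exact conv_bad _ _ f0 f2 hP
  · by_cases hP : goodIdx T μ (k+1) (4*i+2)
    · left; simp [hP]
    · right
      refine ⟨by simp [hP], ?_⟩
      rw [hg2] at hP
      have := conv_bad _ _ f2 f0 (by
        intro hc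
        refine hP ⟨hc.1, ?_⟩
        rw [add_comm (μ (Acell T (k+1) (4*i)))]
        exact hc.2)
      rcases this with h | h
      · exact Or.inl h
      · exact Or.inr (by linarith)
  · by_cases hP : goodIdx T μ (k+1) (4*i+1)
    · left; simp [hP]
    · right
      refine ⟨by simp [hP], ?_⟩
      rw [hg1] at hP
      exact conv_bad _ _ f1 f3 hP
  · by_cases hP : goodIdx T μ (k+1) (4*i+3)
    · left; simp [hP]
    · right
      refine ⟨by simp [hP], ?_⟩
      rw [hg3] at hP
      have := conv_bad _ _ f3 f1 (by
        intro hc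
        refine hP ⟨hc.1, ?_⟩
        rw [add_comm (μ (Acell T (k+1) (4*i+1)))]
        exact hc.2)
      rcases this with h | h
      · exact Or.inl h
      · exact Or.inr (by linarith)

lemma sum_range_four_mul (M : ℕ) (f : ℕ → ℝ≥0∞) :
    ∑ n ∈ Finset.range (4*M), f n =
      ∑ i ∈ Finset.range M, (f (4*i) + f (4*i+1) + f (4*i+2) + f (4*i+3)) := by
  induction M with
  | zero => simp
  | succ M ih =>
    have h : 4*(M+1) = (4*M+1+1+1)+1 := by ring
    rw [h, Finset.sum_range_succ, Finset.sum_range_succ, Finset.sum_range_succ,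
      Finset.sum_range_succ, ih, Finset.sum_range_succ]
    ring

open Classical in
lemma level_bound {μ : Measure ℝ} [IsProbabilityMeasure μ] {T : Set ℝ} (hμT : μ T = 1)
    (k : ℕ) :
    ∑ n ∈ Finset.range (4^(k+1)),
        (if goodIdx T μ (k+1) n then 0 else μ (Acell T (k+1) n) ^ ((1:ℝ)/2)) ≤
      ENNReal.ofReal (Real.sqrt 2 * (5/4)) *
        ∑ i ∈ Finset.range (4^k), μ (Acell T k i) ^ ((1:ℝ)/2) := by
  rw [show (4:ℕ)^(k+1) = 4*4^k by ring, sum_range_four_mul, Finset.mul_sum]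
  exact Finset.sum_le_sum fun i _ => parent_bound hμT k i

open Classical in
lemma series_bound (q : ℝ≥0∞) (P s : ℕ → ℝ≥0∞) (hP0 : P 0 ≤ 1)
    (hrec : ∀ k, P (k+1) ≤ s k + q * P k) :
    ∑' k : ℕ, P (k+1) ≤ q * (1-q)⁻¹ + (∑' k : ℕ, s k) * (1-q)⁻¹ := by
  have claim : ∀ k, P k ≤ q^k + ∑ j ∈ Finset.range k, q^(k-1-j) * s j := by
    intro k
    induction k with
    | zero => simpa using hP0
    | succ k ih =>
      calc P (k+1) ≤ s k + q * P k := hrec k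
        _ ≤ s k + q * (q^k + ∑ j ∈ Finset.range k, q^(k-1-j) * s j) := by
            exact add_le_add_right (mul_le_mul_right ih q) _
        _ = q^(k+1) + (∑ j ∈ Finset.range k, q^(k-j) * s j + s k) := by
            rw [mul_add, Finset.mul_sum]
            have : ∀ j ∈ Finset.range k, q * (q^(k-1-j) * s j) = q^(k-j) * s j := by
              intro j hj
              have hjk : j < k := Finset.mem_range.1 hj
              rw [← mul_assoc, ← pow_succ']
              congr 2
              omega
            rw [Finset.sum_congr rfl this, pow_succ]
            ring
        _ = q^(k+1) + ∑ j ∈ Finset.range (k+1), q^(k-j) * s j := by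
            rw [Finset.sum_range_succ, Nat.sub_self, pow_zero, one_mul]
  calc ∑' k : ℕ, P (k+1)
      ≤ ∑' k : ℕ, (q^(k+1) + ∑ j ∈ Finset.range (k+1), q^(k-j) * s j) := by
        exact ENNReal.tsum_le_tsum fun k => by
          have := claim (k+1)
          simpa using this
    _ = (∑' k : ℕ, q^(k+1)) + ∑' k : ℕ, ∑ j ∈ Finset.range (k+1), q^(k-j) * s j :=
        ENNReal.tsum_add
    _ ≤ q * (1-q)⁻¹ + (∑' k : ℕ, s k) * (1-q)⁻¹ := by
        apply add_le_add
        · rw [show (fun k : ℕ => q^(k+1)) = fun k : ℕ => q * q^k from funext fun k => by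
            rw [pow_succ]; ring]
          rw [ENNReal.tsum_mul_left, ENNReal.tsum_geometric]
        · apply le_of_eq
          have hfs : ∀ k : ℕ, ∑ j ∈ Finset.range (k+1), q^(k-j) * s j =
              ∑' j : ℕ, (if j < k+1 then q^(k-j) * s j else 0) := by
            intro k
            rw [tsum_eq_sum (s := Finset.range (k+1)) (fun b hb => by
              rw [if_neg]; simpa using hb)]
            exact Finset.sum_congr rfl fun j hj => (if_pos (Finset.mem_range.1 hj)).symm
          calc ∑' k : ℕ, ∑ j ∈ Finset.range (k+1), q^(k-j) * s j
              = ∑' k : ℕ, ∑' j : ℕ, (if j < k+1 then q^(k-j) * s j else 0) := by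
                exact tsum_congr hfs
            _ = ∑' j : ℕ, ∑' k : ℕ, (if j < k+1 then q^(k-j) * s j else 0) :=
                ENNReal.tsum_comm
            _ = ∑' j : ℕ, s j * (1-q)⁻¹ := by
                apply tsum_congr
                intro j
                have hshift := Summable.sum_add_tsum_nat_add' (f := fun k : ℕ =>
                  (if j < k+1 then q^(k-j) * s j else 0)) (k := j) ENNReal.summable
                have hzero : ∑ k ∈ Finset.range j, (if j < k+1 then q^(k-j) * s j else 0) = 0 := by
                  apply Finset.sum_eq_zero
                  intro k hk
                  rw [if_neg]
                  have := Finset.mem_range.1 hk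
                  omega
                rw [hzero, zero_add] at hshift
                rw [← hshift]
                have : ∀ m : ℕ, (if j < m + j + 1 then q^(m+j-j) * s j else 0) = q^m * s j := by
                  intro m
                  rw [if_pos (by omega)]
                  congr 2
                  omega
                rw [tsum_congr this, ENNReal.tsum_mul_right, ENNReal.tsum_geometric, mul_comm]
            _ = (∑' j : ℕ, s j) * (1-q)⁻¹ := ENNReal.tsum_mul_right

lemma exists_dyadic {r : ℝ} (h : r ∈ Set.Ioc (0:ℝ) 1) :
    ∃ k : ℕ, r ∈ Set.Ioc ((1/2:ℝ)^(k+1)) ((1/2:ℝ)^k) := by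
  classical
  obtain ⟨n, hn⟩ := exists_pow_lt_of_lt_one h.1 (by norm_num : (1/2:ℝ) < 1)
  have hne : ∃ n : ℕ, (1/2:ℝ)^n < r := ⟨n, hn⟩
  have hN : (1/2:ℝ)^(Nat.find hne) < r := Nat.find_spec hne
  have hN0 : Nat.find hne ≠ 0 := by
    intro h0
    rw [h0] at hN
    simp at hN
    linarith [h.2]
  obtain ⟨k, hk⟩ := Nat.exists_eq_succ_of_ne_zero hN0
  rw [hk] at hN
  refine ⟨k, hN, ?_⟩
  exact le_of_not_gt (Nat.find_min hne (by omega))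

lemma neg_half_mul {a : ℝ≥0∞} (ha : a ≠ ⊤) : a ^ (-(1:ℝ)/2) * a = a ^ ((1:ℝ)/2) := by
  by_cases h0 : a = 0
  · subst h0
    rw [ENNReal.zero_rpow_of_neg (by norm_num), ENNReal.zero_rpow_of_pos (by norm_num), mul_zero]
  · calc a ^ (-(1:ℝ)/2) * a = a ^ (-(1:ℝ)/2) * a ^ (1:ℝ) := by rw [ENNReal.rpow_one]
      _ = a ^ ((-(1:ℝ)/2) + 1) := (ENNReal.rpow_add _ _ h0 ha).symm
      _ = a ^ ((1:ℝ)/2) := by norm_num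

lemma rpow_anti {a b : ℝ≥0∞} (h : a ≤ b) : b ^ (-(1:ℝ)/2) ≤ a ^ (-(1:ℝ)/2) := by
  rw [show (-(1:ℝ)/2) = -(1/2) by norm_num, ENNReal.rpow_neg, ENNReal.rpow_neg]
  exact ENNReal.inv_le_inv.2 (ENNReal.rpow_le_rpow h (by norm_num))

lemma integral_bound {μ : Measure ℝ} [IsProbabilityMeasure μ] {T : Set ℝ}
    (hT : T ⊆ Set.Ico (0:ℝ) 1) (hμT : μ T = 1) :
    (∫⁻ t in T, (∫⁻ r in Set.Ioc (0:ℝ) 1,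
        (μ {s | s ∈ T ∧ |s - t| ≤ r ^ 2}) ^ (-(1:ℝ)/2)) ∂μ) ≤
    ∑' k : ℕ, (2⁻¹:ℝ≥0∞) ^ (k + 1) *
        ∑ n ∈ Finset.range (4 ^ (k + 1)), (μ (Acell T (k+1) n)) ^ ((1:ℝ)/2) := by
  classical
  set D : ℕ → ℝ → ℝ≥0∞ := fun k t => ∑ n ∈ Finset.range (4^(k+1)),
    (cellIco (k+1) n).indicator (fun _ => (μ (Acell T (k+1) n)) ^ (-(1:ℝ)/2)) t with hD
  have hDmeas : ∀ k, Measurable (D k) := by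
    intro k
    apply Finset.measurable_sum
    intro n _
    exact Measurable.indicator measurable_const measurableSet_Ico
  have hDval : ∀ (k : ℕ) (t : ℝ), t ∈ Set.Ico (0:ℝ) 1 →
      D k t = (μ (Acell T (k+1) (⌊t * 4^(k+1)⌋₊))) ^ (-(1:ℝ)/2) := by
    intro k t ht
    obtain ⟨htc, hlt⟩ := mem_cellIco_floor (k := k+1) ht
    rw [hD]
    dsimp only
    rw [Finset.sum_eq_single_of_mem (⌊t * 4^(k+1)⌋₊) (Finset.mem_range.2 hlt)]
    · rw [Set.indicator_of_mem htc]
    · intro n hn hne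
      rw [Set.indicator_of_notMem]
      exact fun htn => Set.disjoint_left.1 (cellIco_disjoint hne) htn htc
  have hw : ∀ k : ℕ, ENNReal.ofReal ((1/2:ℝ)^(k+1)) = (2⁻¹:ℝ≥0∞)^(k+1) := by
    intro k
    rw [ENNReal.ofReal_pow (by norm_num)]
    congr 1
    rw [show (1/2:ℝ) = (2:ℝ)⁻¹ by norm_num, ENNReal.ofReal_inv_of_pos (by norm_num)]
    norm_num
  have hinner : ∀ t ∈ Set.Ico (0:ℝ) 1,
      (∫⁻ r in Set.Ioc (0:ℝ) 1, (μ {s | s ∈ T ∧ |s - t| ≤ r ^ 2}) ^ (-(1:ℝ)/2)) ≤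
      ∑' k : ℕ, ENNReal.ofReal ((1/2:ℝ)^(k+1)) * D k t := by
    intro t ht
    have hmaj : ∀ r ∈ Set.Ioc (0:ℝ) 1,
        (μ {s | s ∈ T ∧ |s - t| ≤ r ^ 2}) ^ (-(1:ℝ)/2) ≤
        ∑' k : ℕ, (Set.Ioc ((1/2:ℝ)^(k+1)) ((1/2:ℝ)^k)).indicator (fun _ => D k t) r := by
      intro r hr
      obtain ⟨k, hk⟩ := exists_dyadic hr
      calc (μ {s | s ∈ T ∧ |s - t| ≤ r ^ 2}) ^ (-(1:ℝ)/2) ≤ D k t := by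
            rw [hDval k t ht]
            apply rpow_anti
            apply measure_mono
            rintro s ⟨hs1, hs2⟩
            refine ⟨hs2, ?_⟩
            have hwidth : |s - t| < ((4:ℝ)^(k+1))⁻¹ :=
              cellIco_width hs1 (mem_cellIco_floor ht).1
            have h2 : ((1/2:ℝ)^(k+1))^2 = ((4:ℝ)^(k+1))⁻¹ := by
              rw [← pow_mul, mul_comm, pow_mul,
                show ((1/2:ℝ)^2) = ((4:ℝ))⁻¹ by norm_num, inv_pow]
            have hp : (0:ℝ) < (1/2:ℝ)^(k+1) := by positivity
            have h1 : ((4:ℝ)^(k+1))⁻¹ ≤ r^2 := by nlinarith [hk.1]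
            linarith [le_of_lt hwidth]
        _ ≤ ∑' k : ℕ,
              (Set.Ioc ((1/2:ℝ)^(k+1)) ((1/2:ℝ)^k)).indicator (fun _ => D k t) r := by
            rw [← Set.indicator_of_mem hk (fun _ => D k t)]
            exact ENNReal.le_tsum k
    calc (∫⁻ r in Set.Ioc (0:ℝ) 1, (μ {s | s ∈ T ∧ |s - t| ≤ r ^ 2}) ^ (-(1:ℝ)/2))
        ≤ ∫⁻ r in Set.Ioc (0:ℝ) 1, ∑' k : ℕ,
            (Set.Ioc ((1/2:ℝ)^(k+1)) ((1/2:ℝ)^k)).indicator (fun _ => D k t) r := by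
          apply lintegral_mono_ae
          filter_upwards [ae_restrict_mem measurableSet_Ioc] with r hr using hmaj r hr
      _ = ∑' k : ℕ, ENNReal.ofReal ((1/2:ℝ)^(k+1)) * D k t := by
          rw [lintegral_tsum (fun k =>
            (Measurable.indicator measurable_const measurableSet_Ioc).aemeasurable)]
          apply tsum_congr
          intro k
          rw [lintegral_indicator measurableSet_Ioc, setLIntegral_const,
            Measure.restrict_apply measurableSet_Ioc,
            Set.inter_eq_self_of_subset_left (by
              intro x hx
              obtain ⟨hx1, hx2⟩ := hx
              constructor
              · have : (0:ℝ) < (1/2:ℝ)^(k+1) := by positivity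
                linarith
              · calc x ≤ (1/2:ℝ)^k := hx2
                  _ ≤ 1 := pow_le_one₀ (by norm_num) (by norm_num)),
            Real.volume_Ioc, show (1/2:ℝ)^k - (1/2:ℝ)^(k+1) = (1/2:ℝ)^(k+1) by
              rw [pow_succ]; ring, mul_comm]
  calc (∫⁻ t in T, (∫⁻ r in Set.Ioc (0:ℝ) 1,
          (μ {s | s ∈ T ∧ |s - t| ≤ r ^ 2}) ^ (-(1:ℝ)/2)) ∂μ)
      ≤ (∫⁻ t in Set.Ico (0:ℝ) 1, (∫⁻ r in Set.Ioc (0:ℝ) 1,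
          (μ {s | s ∈ T ∧ |s - t| ≤ r ^ 2}) ^ (-(1:ℝ)/2)) ∂μ) :=
        lintegral_mono' (Measure.restrict_mono hT le_rfl) le_rfl
    _ ≤ ∫⁻ t in Set.Ico (0:ℝ) 1, (∑' k : ℕ, ENNReal.ofReal ((1/2:ℝ)^(k+1)) * D k t) ∂μ := by
        apply lintegral_mono_ae
        filter_upwards [ae_restrict_mem measurableSet_Ico] with t ht using hinner t ht
    _ = ∑' k : ℕ, ENNReal.ofReal ((1/2:ℝ)^(k+1)) * ∫⁻ t in Set.Ico (0:ℝ) 1, D k t ∂μ := by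
        rw [lintegral_tsum (fun k => ((hDmeas k).const_mul _).aemeasurable)]
        apply tsum_congr
        intro k
        rw [lintegral_const_mul _ (hDmeas k)]
    _ = ∑' k : ℕ, (2⁻¹:ℝ≥0∞) ^ (k + 1) *
          ∑ n ∈ Finset.range (4 ^ (k + 1)), (μ (Acell T (k+1) n)) ^ ((1:ℝ)/2) := by
        apply tsum_congr
        intro k
        rw [hw k]
        congr 1
        have step1 : ∫⁻ t in Set.Ico (0:ℝ) 1, D k t ∂μ =
            ∑ n ∈ Finset.range (4^(k+1)), ∫⁻ t in Set.Ico (0:ℝ) 1,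
              (cellIco (k+1) n).indicator
                (fun _ => (μ (Acell T (k+1) n)) ^ (-(1:ℝ)/2)) t ∂μ :=
          lintegral_finset_sum _ (fun n _ =>
            Measurable.indicator measurable_const measurableSet_Ico)
        rw [step1]
        apply Finset.sum_congr rfl
        intro n hn
        have hms : MeasurableSet (cellIco (k+1) n) := measurableSet_Ico
        rw [lintegral_indicator hms, setLIntegral_const,
          Measure.restrict_apply hms,
          Set.inter_eq_self_of_subset_left (cellIco_subset_unit (Finset.mem_range.1 hn)),
          ← μAcell hμT, neg_half_mul (measure_ne_top μ _)]

/- Proposition 2 of the paper: with `L = √2·5/4 < 2` and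
`S = ∑_{k≥1} 2^{-k} ∑_i (μ A^{(k)}_i)^{1/2} 1[i ∈ I(k)] < ∞`, the full sum and hence the
weakly majorizing measure functional are bounded by `(1/(1-L/2))·(L+S)`. -/
open Classical in
theorem stmt8 (T : Set ℝ) (hT : T ⊆ Set.Ico (0:ℝ) 1) (hTne : T.Nonempty)
    (μ : Measure ℝ) [IsProbabilityMeasure μ] (hμT : μ T = 1)
    (S : ℝ≥0∞)
    (hS : S = ∑' k : ℕ, 2⁻¹ ^ (k + 1) *
      ∑ n ∈ Finset.range (4 ^ (k + 1)),
        (if goodIdx T μ (k + 1) n then (μ (Acell T (k+1) n)) ^ ((1:ℝ)/2) else 0))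
    (hSfin : S ≠ ⊤) :
    (∑' k : ℕ, 2⁻¹ ^ (k + 1) *
        ∑ n ∈ Finset.range (4 ^ (k + 1)), (μ (Acell T (k+1) n)) ^ ((1:ℝ)/2)) ≤
      ENNReal.ofReal (1 / (1 - Real.sqrt 2 * (5/4) / 2)) *
        (ENNReal.ofReal (Real.sqrt 2 * (5/4)) + S) ∧
    (∫⁻ t in T, (∫⁻ r in Set.Ioc (0:ℝ) 1,
        (μ {s | s ∈ T ∧ |s - t| ≤ r ^ 2}) ^ (-(1:ℝ)/2)) ∂μ) ≤
      ENNReal.ofReal (1 / (1 - Real.sqrt 2 * (5/4) / 2)) *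
        (ENNReal.ofReal (Real.sqrt 2 * (5/4)) + S) := by
  have h22 : Real.sqrt 2 ^ 2 = 2 := Real.sq_sqrt (by norm_num)
  have h2n := Real.sqrt_nonneg 2
  have hL2 : Real.sqrt 2 * (5/4) / 2 < 1 := by nlinarith
  have hLnn : (0:ℝ) ≤ Real.sqrt 2 * (5/4) := by positivity
  -- the full level sums
  set f : ℕ → ℝ≥0∞ :=
    fun k => ∑ n ∈ Finset.range (4^k), μ (Acell T k n) ^ ((1:ℝ)/2) with hf
  set P : ℕ → ℝ≥0∞ := fun k => 2⁻¹^k * f k with hP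
  set s : ℕ → ℝ≥0∞ := fun k => 2⁻¹^(k+1) *
    ∑ n ∈ Finset.range (4 ^ (k + 1)),
      (if goodIdx T μ (k + 1) n then (μ (Acell T (k+1) n)) ^ ((1:ℝ)/2) else 0) with hs
  set q : ℝ≥0∞ := ENNReal.ofReal (Real.sqrt 2 * (5/4)) * 2⁻¹ with hq
  have hf0 : f 0 = 1 := by
    rw [hf]
    have hA : Acell T 0 0 = T := by
      have hcell : cellIco 0 0 = Set.Ico (0:ℝ) 1 := by
        unfold cellIco
        norm_num
      rw [Acell_eq, hcell, Set.inter_eq_right.2 hT]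
    simp [hA, hμT]
  have hsplit : ∀ k : ℕ, f (k+1) ≤
      (∑ n ∈ Finset.range (4 ^ (k + 1)),
        (if goodIdx T μ (k + 1) n then (μ (Acell T (k+1) n)) ^ ((1:ℝ)/2) else 0)) +
      ENNReal.ofReal (Real.sqrt 2 * (5/4)) * f k := by
    intro k
    have hdecomp : f (k+1) =
        (∑ n ∈ Finset.range (4 ^ (k + 1)),
          (if goodIdx T μ (k + 1) n then (μ (Acell T (k+1) n)) ^ ((1:ℝ)/2) else 0)) +
        ∑ n ∈ Finset.range (4 ^ (k + 1)),
          (if goodIdx T μ (k + 1) n then 0 else (μ (Acell T (k+1) n)) ^ ((1:ℝ)/2)) := by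
      rw [hf, ← Finset.sum_add_distrib]
      apply Finset.sum_congr rfl
      intro n _
      by_cases h : goodIdx T μ (k+1) n <;> simp [h]
    rw [hdecomp]
    exact add_le_add_right (level_bound hμT k) _
  have hrec : ∀ k, P (k+1) ≤ s k + q * P k := by
    intro k
    calc P (k+1) = 2⁻¹^(k+1) * f (k+1) := rfl
      _ ≤ 2⁻¹^(k+1) * ((∑ n ∈ Finset.range (4 ^ (k + 1)),
            (if goodIdx T μ (k + 1) n then (μ (Acell T (k+1) n)) ^ ((1:ℝ)/2) else 0)) +
            ENNReal.ofReal (Real.sqrt 2 * (5/4)) * f k) := mul_le_mul_right (hsplit k) _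
      _ = s k + q * P k := by
          rw [hs, hq, hP, mul_add, pow_succ]
          ring
  have hP0 : P 0 ≤ 1 := by
    rw [hP]
    simp [hf0]
  have hmain := series_bound q P s hP0 hrec
  have hSs : (∑' k, s k) = S := by rw [hS]
  rw [hSs] at hmain
  -- identify the inverse factor
  have hq2 : ENNReal.ofReal (Real.sqrt 2 * (5/4) / 2) = q := by
    rw [div_eq_mul_inv, ENNReal.ofReal_mul hLnn,
      ENNReal.ofReal_inv_of_pos (by norm_num : (0:ℝ) < 2), hq]
    norm_num
  have h1q : (1 - q) = ENNReal.ofReal (1 - Real.sqrt 2 * (5/4) / 2) := by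
    rw [ENNReal.ofReal_sub _ (by positivity), ENNReal.ofReal_one, hq2]
  have hinv : (1 - q)⁻¹ = ENNReal.ofReal (1 / (1 - Real.sqrt 2 * (5/4) / 2)) := by
    rw [h1q, one_div, ← ENNReal.ofReal_inv_of_pos (by linarith)]
  have hqL : q ≤ ENNReal.ofReal (Real.sqrt 2 * (5/4)) := by
    rw [hq]
    calc ENNReal.ofReal (Real.sqrt 2 * (5/4)) * 2⁻¹
        ≤ ENNReal.ofReal (Real.sqrt 2 * (5/4)) * 1 :=
          mul_le_mul_right (by norm_num) _
      _ = ENNReal.ofReal (Real.sqrt 2 * (5/4)) := mul_one _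
  have hbound : q * (1-q)⁻¹ + S * (1-q)⁻¹ ≤
      ENNReal.ofReal (1 / (1 - Real.sqrt 2 * (5/4) / 2)) *
        (ENNReal.ofReal (Real.sqrt 2 * (5/4)) + S) := by
    calc q * (1-q)⁻¹ + S * (1-q)⁻¹
        ≤ ENNReal.ofReal (Real.sqrt 2 * (5/4)) * (1-q)⁻¹ + S * (1-q)⁻¹ :=
          add_le_add_left (mul_le_mul_left hqL _) _
      _ = (1-q)⁻¹ * (ENNReal.ofReal (Real.sqrt 2 * (5/4)) + S) := by ring
      _ = ENNReal.ofReal (1 / (1 - Real.sqrt 2 * (5/4) / 2)) *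
            (ENNReal.ofReal (Real.sqrt 2 * (5/4)) + S) := by rw [hinv]
  have hpart1 : (∑' k : ℕ, 2⁻¹ ^ (k + 1) *
      ∑ n ∈ Finset.range (4 ^ (k + 1)), (μ (Acell T (k+1) n)) ^ ((1:ℝ)/2)) ≤
      ENNReal.ofReal (1 / (1 - Real.sqrt 2 * (5/4) / 2)) *
        (ENNReal.ofReal (Real.sqrt 2 * (5/4)) + S) := by
    refine le_trans (le_of_eq ?_) (le_trans hmain hbound)
    rw [hP, hf]
  exact ⟨hpart1, le_trans (integral_bound hT hμT) hpart1⟩
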